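/- arXiv:2010.14927 — 5 statements merged into one kernel-verified Lean document; each statement's English description precedes it below -/
import Mathlib

section
/- For all constants c1, c2 ∈ (0,1) and every integer depth t ≥ 2, there exist constants C1, C2 > 0 such that the following holds. Let d = d_1 ≥ d_2 ≥ ... ≥ d_t be dimensions with d_t ≥ C1·ln(d) and d ≥ 2, let W_j be d_{j+1}×d_j real matrices for j = 1,...,t (with d_{t+1} = 1) such that each W_j is (c1, c2)-surjective and has operator norm at most 1/c2, and let x0 ∈ ℝ^d be a nonzero vector such that: (i) for every i ∈ {1,...,t−1}, at least 2·c1·d_{i+1} coordinates of h_{W_1,...,W_i}(x0) are at least c2·‖x0‖/√d, and (ii) |h(x0)| ≤ ‖x0‖·√(ln(d)/d). Then there exists x' ∈ ℝ^d with ‖x' − x0‖ ≤ C2·‖x0‖·√(ln d)/√d such that h(x0)·h(x') ≤ 0. -/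
open MeasureTheory ProbabilityTheory Real Finset Matrix

noncomputable section

/-- Euclidean norm of a vector in `ℝ^n`. -/
def e2norm {n : ℕ} (v : Fin n → ℝ) : ℝ := Real.sqrt (∑ i, v i ^ 2)

/-- Coordinatewise ReLU. -/
def relu {n : ℕ} (v : Fin n → ℝ) : Fin n → ℝ := fun i => max (v i) 0

/-- Post-activation output of layer `i` of the ReLU network (`netPost 0 = x` is the input;
no ReLU is applied to the input). -/
def netPost (D : ℕ → ℕ) (W : ∀ j : ℕ, Matrix (Fin (D (j + 1))) (Fin (D j)) ℝ)
    (x : Fin (D 0) → ℝ) : (i : ℕ) → Fin (D i) → ℝ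
  | 0 => x
  | i + 1 => relu ((W i).mulVec (netPost D W x i))

/-- Pre-activation output of layer `i` of the ReLU network: for `i ≥ 1` this is
`h_{W_1,…,W_i}(x)`, the output of the `i`-th layer before the ReLU is applied. -/
def netPre (D : ℕ → ℕ) (W : ∀ j : ℕ, Matrix (Fin (D (j + 1))) (Fin (D j)) ℝ)
    (x : Fin (D 0) → ℝ) : (i : ℕ) → Fin (D i) → ℝ
  | 0 => x
  | i + 1 => (W i).mulVec (netPost D W x i)

/-- The real-valued output `h(x)` of a depth-`t` network: when `D t = 1` the sum over the
single output coordinate is exactly the network output. -/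
def netOut (D : ℕ → ℕ) (W : ∀ j : ℕ, Matrix (Fin (D (j + 1))) (Fin (D j)) ℝ)
    (t : ℕ) (x : Fin (D 0) → ℝ) : ℝ := ∑ r, netPre D W x t r
/-- `W` is `c`-surjective: `c·B^k ⊆ W(B^d)` (balls w.r.t. Euclidean norms). -/
def IsCSurj {k d : ℕ} (W : Matrix (Fin k) (Fin d) ℝ) (c : ℝ) : Prop :=
  ∀ y : Fin k → ℝ, e2norm y ≤ c → ∃ x : Fin d → ℝ, e2norm x ≤ 1 ∧ W.mulVec x = y

/-- `W^A`: zero out all columns of `W` with index outside `A`. -/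
def zeroOutside {k d : ℕ} (W : Matrix (Fin k) (Fin d) ℝ) (A : Finset (Fin d)) :
    Matrix (Fin k) (Fin d) ℝ :=
  Matrix.of fun i j => if j ∈ A then W i j else 0

/-- `W` is `(c1, c2)`-surjective. -/
def IsPairSurj {k d : ℕ} (W : Matrix (Fin k) (Fin d) ℝ) (c1 c2 : ℝ) : Prop :=
  ∀ A : Finset (Fin d), c1 * d ≤ A.card → IsCSurj (zeroOutside W A) c2

/- ### Auxiliary lemmas about `e2norm` -/

lemma e2norm_nonneg {n : ℕ} (v : Fin n → ℝ) : 0 ≤ e2norm v := Real.sqrt_nonneg _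

lemma e2norm_sq {n : ℕ} (v : Fin n → ℝ) : e2norm v ^ 2 = ∑ i, v i ^ 2 :=
  Real.sq_sqrt (Finset.sum_nonneg fun _ _ => sq_nonneg _)

lemma e2norm_eq_norm {n : ℕ} (v : Fin n → ℝ) :
    e2norm v = ‖(WithLp.toLp 2 v : EuclideanSpace ℝ (Fin n))‖ := by
  rw [EuclideanSpace.norm_eq]
  simp [e2norm, sq_abs]

lemma e2norm_add_le {n : ℕ} (v w : Fin n → ℝ) :
    e2norm (v + w) ≤ e2norm v + e2norm w := by
  rw [e2norm_eq_norm, e2norm_eq_norm, e2norm_eq_norm]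
  exact norm_add_le (E := EuclideanSpace ℝ (Fin n)) (WithLp.toLp 2 v) (WithLp.toLp 2 w)

lemma e2norm_smul {n : ℕ} (c : ℝ) (v : Fin n → ℝ) :
    e2norm (c • v) = |c| * e2norm v := by
  rw [e2norm_eq_norm, e2norm_eq_norm]
  exact norm_smul (α := ℝ) (β := EuclideanSpace ℝ (Fin n)) c (WithLp.toLp 2 v)

lemma e2norm_zero {n : ℕ} : e2norm (0 : Fin n → ℝ) = 0 := by
  simp [e2norm]

lemma e2norm_pos {n : ℕ} {v : Fin n → ℝ} (h : v ≠ 0) : 0 < e2norm v := by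
  rw [e2norm_eq_norm]
  exact norm_pos_iff.2 (by simpa using h)

lemma abs_le_e2norm {n : ℕ} (v : Fin n → ℝ) (r : Fin n) : |v r| ≤ e2norm v := by
  rw [← Real.sqrt_sq_eq_abs]
  apply Real.sqrt_le_sqrt
  exact Finset.single_le_sum (f := fun i => v i ^ 2) (fun i _ => sq_nonneg _) (mem_univ r)

lemma e2norm_mono_sq {n : ℕ} {u v : Fin n → ℝ} (h : ∀ i, u i ^ 2 ≤ v i ^ 2) :
    e2norm u ≤ e2norm v :=
  Real.sqrt_le_sqrt (Finset.sum_le_sum fun i _ => h i)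

lemma cheb {n : ℕ} (v : Fin n → ℝ) {a : ℝ} (ha : 0 < a) :
    ((univ.filter fun r => a < |v r|).card : ℝ) * a ^ 2 ≤ e2norm v ^ 2 := by
  rw [e2norm_sq]
  calc ((univ.filter fun r => a < |v r|).card : ℝ) * a ^ 2
      = ∑ r ∈ univ.filter fun r => a < |v r|, a ^ 2 := by rw [Finset.sum_const, nsmul_eq_mul]
    _ ≤ ∑ r ∈ univ.filter fun r => a < |v r|, v r ^ 2 := by
        apply Finset.sum_le_sum
        intro r hr
        have := (mem_filter.1 hr).2
        nlinarith [abs_nonneg (v r), sq_abs (v r)]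
    _ ≤ ∑ r, v r ^ 2 := Finset.sum_le_sum_of_subset_of_nonneg (filter_subset _ _)
        (fun i _ _ => sq_nonneg _)

lemma surj_support {k d : ℕ} {M : Matrix (Fin k) (Fin d) ℝ} {c2 : ℝ} (hc2 : 0 < c2)
    {A : Finset (Fin d)} (h : IsCSurj (zeroOutside M A) c2) (y : Fin k → ℝ) :
    ∃ u : Fin d → ℝ, e2norm u ≤ e2norm y / c2 ∧ (∀ r, u r ≠ 0 → r ∈ A) ∧
      M.mulVec u = y := by
  by_cases hy : y = 0
  · refine ⟨0, ?_, by simp, by simp [hy]⟩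
    rw [hy, e2norm_zero, e2norm_zero, zero_div]
  · have hny : 0 < e2norm y := e2norm_pos hy
    obtain ⟨x, hx1, hx2⟩ := h ((c2 / e2norm y) • y) (by
      rw [e2norm_smul, abs_of_pos (by positivity)]
      rw [div_mul_cancel₀ _ (ne_of_gt hny)])
    refine ⟨fun r => if r ∈ A then (e2norm y / c2) * x r else 0, ?_, ?_, ?_⟩
    · have h1 : e2norm (fun r => if r ∈ A then (e2norm y / c2) * x r else 0)
          ≤ e2norm ((e2norm y / c2) • x) := by
        apply e2norm_mono_sq
        intro i
        by_cases hi : i ∈ A <;> simp [hi, Pi.smul_apply, smul_eq_mul] <;> positivity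
      refine h1.trans ?_
      rw [e2norm_smul, abs_of_pos (by positivity)]
      calc e2norm y / c2 * e2norm x ≤ e2norm y / c2 * 1 := by
            apply mul_le_mul_of_nonneg_left hx1 (by positivity)
        _ = e2norm y / c2 := mul_one _
    · intro r hr
      by_contra hra
      simp [hra] at hr
    · funext i
      have : M.mulVec (fun r => if r ∈ A then (e2norm y / c2) * x r else 0) i
          = ((e2norm y / c2) • (zeroOutside M A).mulVec x) i := by
        simp only [mulVec, dotProduct, Pi.smul_apply, smul_eq_mul, Finset.mul_sum,
          zeroOutside, Matrix.of_apply]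
        apply Finset.sum_congr rfl
        intro j _
        by_cases hj : j ∈ A <;> simp [hj] <;> ring
      rw [this, hx2]
      simp [Pi.smul_apply, smul_eq_mul]
      field_simp

lemma relu_add_eq {n : ℕ} (v w : Fin n → ℝ)
    (h : ∀ r, w r ≠ 0 → 0 ≤ v r ∧ 0 ≤ v r + w r) :
    relu (v + w) = relu v + w := by
  funext r
  by_cases hr : w r = 0
  · simp [relu, hr]
  · obtain ⟨h1, h2⟩ := h r hr
    simp only [relu, Pi.add_apply]
    rw [max_eq_left h2, max_eq_left h1]

set_option maxHeartbeats 3000000 in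
/-- Theorem 4 in the paper, for typical weights and typical examples.
Here `D 0 = d = d_1, D 1 = d_2, …, D (t-1) = d_t, D t = d_{t+1} = 1`, and `W j` is the
`(j+1)`-st weight matrix `W_{j+1}`, of size `d_{j+2} × d_{j+1}`. -/
theorem stmt1 (c1 c2 : ℝ) (hc1 : 0 < c1) (hc1' : c1 < 1) (hc2 : 0 < c2) (hc2' : c2 < 1)
    (t : ℕ) (ht : 2 ≤ t) :
    ∃ C1 C2 : ℝ, 0 < C1 ∧ 0 < C2 ∧
      ∀ D : ℕ → ℕ,
        (∀ j : ℕ, j + 1 < t → D (j + 1) ≤ D j) →        -- d_1 ≥ d_2 ≥ … ≥ d_t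
        (C1 * Real.log (D 0) ≤ (D (t - 1) : ℝ)) →        -- d_t ≥ C1·ln d
        2 ≤ D 0 →                                        -- d ≥ 2
        D t = 1 →                                        -- output dimension is 1
        ∀ W : ∀ j : ℕ, Matrix (Fin (D (j + 1))) (Fin (D j)) ℝ,
          (∀ j : ℕ, j < t → IsPairSurj (W j) c1 c2) →    -- each W_j is (c1,c2)-surjective
          (∀ j : ℕ, j < t → ∀ v : Fin (D j) → ℝ,
            e2norm ((W j).mulVec v) ≤ (1 / c2) * e2norm v) →  -- ‖W_j‖_op ≤ 1/c2
          ∀ x0 : Fin (D 0) → ℝ, x0 ≠ 0 →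
            -- (i) for every 1 ≤ i ≤ t-1, at least 2·c1·d_{i+1} coordinates of
            --     h_{W_1,…,W_i}(x0) are at least c2·‖x0‖/√d
            (∀ i : ℕ, 1 ≤ i → i < t →
              2 * c1 * (D i : ℝ) ≤
                ((univ.filter fun r : Fin (D i) =>
                  c2 * e2norm x0 / Real.sqrt (D 0) ≤ netPre D W x0 i r).card : ℝ)) →
            -- (ii) |h(x0)| ≤ ‖x0‖·√(ln(d)/d)
            |netOut D W t x0| ≤ e2norm x0 * Real.sqrt (Real.log (D 0) / (D 0 : ℝ)) →
            ∃ x' : Fin (D 0) → ℝ,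
              e2norm (x' - x0) ≤
                C2 * e2norm x0 * Real.sqrt (Real.log (D 0)) / Real.sqrt (D 0) ∧
              netOut D W t x0 * netOut D W t x' ≤ 0 := by
  refine ⟨4 / (c1 * c2 ^ (2 * t + 2)), 1 / c2 ^ t + 1, by positivity, by positivity, ?_⟩
  intro D hmono hC1 hd2 hDt W hsurj _hop x0 hx0 hyp1 hyp2
  have hd : (2 : ℝ) ≤ (D 0 : ℝ) := by exact_mod_cast hd2
  have hL : 0 < Real.log (D 0) := Real.log_pos (by linarith)
  have hhalf : (1 : ℝ) / 2 ≤ Real.log (D 0) := by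
    have h2 : Real.log 2 ≤ Real.log (D 0) := Real.log_le_log (by norm_num) hd
    have := Real.log_two_gt_d9
    linarith
  have hsd : 0 < Real.sqrt (D 0) := Real.sqrt_pos.2 (by linarith)
  set L := Real.log (D 0) with hLdef
  set n := e2norm x0 with hndef
  have hn : 0 < n := e2norm_pos hx0
  set θ := c2 * n / Real.sqrt (D 0) with hθdef
  set θ2 := c2 * n / (2 * Real.sqrt (D 0)) with hθ2def
  have hθ2 : 0 < θ2 := by rw [hθ2def]; positivity
  have hθeq : θ = 2 * θ2 := by rw [hθdef, hθ2def]; field_simp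
  set η := c2 ^ t * θ2 with hηdef
  have hη : 0 < η := mul_pos (pow_pos hc2 t) hθ2
  set h0 := netOut D W t x0 with hh0def
  by_cases hzero : h0 = 0
  · refine ⟨x0, ?_, ?_⟩
    · rw [sub_self, e2norm_zero]
      apply div_nonneg _ (Real.sqrt_nonneg _)
      exact mul_nonneg (mul_nonneg (by positivity) hn.le) (Real.sqrt_nonneg _)
    · rw [← hh0def, hzero, zero_mul]
  -- the sign of the output
  set s := if 0 ≤ h0 then (1 : ℝ) else -1 with hsdef
  have hs1 : h0 * s = |h0| := by
    rw [hsdef]; split_ifs with h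
    · rw [mul_one, abs_of_nonneg h]
    · rw [abs_of_neg (lt_of_not_ge h)]; ring
  have hsabs : |s| = 1 := by rw [hsdef]; split_ifs <;> norm_num
  have habs0 : 0 < |h0| := abs_pos.2 hzero
  set K := ⌈|h0| / η⌉₊ with hKdef
  have hKle : |h0| ≤ (K : ℝ) * η := by
    have := Nat.le_ceil (|h0| / η)
    rw [div_le_iff₀ hη] at this
    exact this
  have hKlt : (K : ℝ) < |h0| / η + 1 := Nat.ceil_lt_add_one (by positivity)
  have hyp2' : |h0| ≤ n * Real.sqrt L / Real.sqrt (D 0) := by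
    rw [mul_div_assoc, ← Real.sqrt_div hL.le]
    exact hyp2
  have hK0 : |h0| / η ≤ 2 * Real.sqrt L / c2 ^ (t + 1) := by
    rw [div_le_div_iff₀ hη (by positivity)]
    have heq : 2 * Real.sqrt L * η = (n * Real.sqrt L / Real.sqrt (D 0)) * c2 ^ (t + 1) := by
      rw [hηdef, hθ2def, pow_succ]
      field_simp
    rw [heq]
    exact mul_le_mul_of_nonneg_right hyp2' (by positivity)
  -- monotonicity of dimensions
  have hDmono : ∀ a b : ℕ, a ≤ b → b < t → D b ≤ D a := by
    intro a b hab
    induction b, hab using Nat.le_induction with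
    | base => intro _; exact le_rfl
    | succ b hab ih => intro hbt; exact (hmono b hbt).trans (ih (by omega))
  have hDt1 : ∀ j : ℕ, 1 ≤ j → j < t → 4 * L / c2 ^ (2 * t + 2) ≤ c1 * (D j : ℝ) := by
    intro j h1 hjt
    have hD1 : (D (t - 1) : ℝ) ≤ (D j : ℝ) := by
      exact_mod_cast hDmono j (t - 1) (by omega) (by omega)
    have h2 : c1 * (4 / (c1 * c2 ^ (2 * t + 2)) * L) = 4 * L / c2 ^ (2 * t + 2) := by
      field_simp
    calc 4 * L / c2 ^ (2 * t + 2) = c1 * (4 / (c1 * c2 ^ (2 * t + 2)) * L) := h2.symm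
      _ ≤ c1 * (D (t - 1) : ℝ) := by
          apply mul_le_mul_of_nonneg_left _ hc1.le
          exact hC1
      _ ≤ c1 * (D j : ℝ) := mul_le_mul_of_nonneg_left hD1 hc1.le
  -- the squared number of steps is at most c1 * D j
  have hk2 : ∀ k : ℕ, (k : ℝ) < |h0| / η → ∀ j : ℕ, 1 ≤ j → j < t →
      ((k : ℝ)) ^ 2 ≤ c1 * (D j : ℝ) := by
    intro k hk j hj1 hjt
    have h1 : (k : ℝ) ≤ 2 * Real.sqrt L / c2 ^ (t + 1) := (hk.le).trans hK0
    have h2 : ((k : ℝ)) ^ 2 ≤ (2 * Real.sqrt L / c2 ^ (t + 1)) ^ 2 :=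
      pow_le_pow_left₀ (Nat.cast_nonneg k) h1 2
    have h3 : (2 * Real.sqrt L / c2 ^ (t + 1)) ^ 2 = 4 * L / c2 ^ (2 * t + 2) := by
      rw [div_pow, mul_pow, Real.sq_sqrt hL.le]
      have h4 : (c2 ^ (t + 1)) ^ 2 = c2 ^ (2 * t + 2) := by
        rw [← pow_mul]; congr 1; ring
      rw [h4]; norm_num
    rw [h3] at h2
    exact h2.trans (hDt1 j hj1 hjt)
  -- main induction over the steps
  have main : ∀ k : ℕ, k ≤ K → ∃ x : Fin (D 0) → ℝ,
      (∀ i : ℕ, i ≤ t →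
        c2 ^ t * e2norm (netPre D W x i - netPre D W x0 i) ≤ c2 ^ i * ((k : ℝ) * η)) ∧
      netOut D W t x = h0 - (k : ℝ) * η * s := by
    intro k
    induction k with
    | zero =>
      intro _
      refine ⟨x0, ?_, by simp [hh0def]⟩
      intro i _
      simp [sub_self, e2norm_zero]
    | succ k ih =>
      intro hk1
      obtain ⟨x, hxinv, hxout⟩ := ih (by omega)
      have hkK : k < K := by omega
      have hkb : (k : ℝ) < |h0| / η := Nat.lt_ceil.1 hkK
      -- good sets at each layer have large cardinality
      have hAcard : ∀ j : ℕ, 1 ≤ j → j < t →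
          c1 * (D j : ℝ) ≤ ((univ.filter fun r : Fin (D j) =>
            θ ≤ netPre D W x0 j r ∧
              |netPre D W x j r - netPre D W x0 j r| ≤ θ2).card : ℝ) := by
        intro j hj1 hjt
        have hdiff : e2norm (netPre D W x j - netPre D W x0 j) ≤ (k : ℝ) * θ2 := by
          have h1 := hxinv j (le_of_lt hjt)
          have h2 : c2 ^ j * ((k : ℝ) * η) ≤ c2 ^ t * ((k : ℝ) * θ2) := by
            rw [hηdef]
            have hX : (0 : ℝ) ≤ (k : ℝ) * (c2 ^ t * θ2) := by positivity
            calc c2 ^ j * ((k : ℝ) * (c2 ^ t * θ2))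
                ≤ 1 * ((k : ℝ) * (c2 ^ t * θ2)) :=
                  mul_le_mul_of_nonneg_right (pow_le_one₀ hc2.le hc2'.le) hX
              _ = c2 ^ t * ((k : ℝ) * θ2) := by ring
          exact (mul_le_mul_iff_right₀ (pow_pos hc2 t)).1 (h1.trans h2)
        have hB : ((univ.filter fun r : Fin (D j) =>
            θ2 < |(netPre D W x j - netPre D W x0 j) r|).card : ℝ) ≤ ((k : ℝ)) ^ 2 := by
          have h1 := cheb (netPre D W x j - netPre D W x0 j) hθ2
          have h2 : e2norm (netPre D W x j - netPre D W x0 j) ^ 2 ≤ ((k : ℝ) * θ2) ^ 2 :=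
            pow_le_pow_left₀ (e2norm_nonneg _) hdiff 2
          have h3 := h1.trans h2
          rw [mul_pow] at h3
          exact (mul_le_mul_iff_left₀ (pow_pos hθ2 2)).1 h3
        have hsub : (univ.filter fun r : Fin (D j) => θ ≤ netPre D W x0 j r) ⊆
            (univ.filter fun r : Fin (D j) =>
              θ ≤ netPre D W x0 j r ∧ |netPre D W x j r - netPre D W x0 j r| ≤ θ2) ∪
            (univ.filter fun r : Fin (D j) =>
              θ2 < |(netPre D W x j - netPre D W x0 j) r|) := by
          intro r hr
          simp only [mem_filter, mem_union, mem_univ, true_and, Pi.sub_apply] at *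
          by_cases h : |netPre D W x j r - netPre D W x0 j r| ≤ θ2
          · exact Or.inl ⟨hr, h⟩
          · exact Or.inr (lt_of_not_ge h)
        have hcard := (Finset.card_le_card hsub).trans (Finset.card_union_le _ _)
        have hcard' : ((univ.filter fun r : Fin (D j) =>
            θ ≤ netPre D W x0 j r).card : ℝ) ≤
            ((univ.filter fun r : Fin (D j) =>
              θ ≤ netPre D W x0 j r ∧
                |netPre D W x j r - netPre D W x0 j r| ≤ θ2).card : ℝ) +
            ((univ.filter fun r : Fin (D j) =>
              θ2 < |(netPre D W x j - netPre D W x0 j) r|).card : ℝ) := by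
          exact_mod_cast hcard
        have hk2' := hk2 k hkb j hj1 hjt
        have hh1 := hyp1 j hj1 hjt
        linarith
      -- inner induction: realizing a target perturbation of the pre-activations
      have inner : ∀ j : ℕ, 1 ≤ j → j ≤ t → ∀ w : Fin (D j) → ℝ,
          e2norm w ≤ c2 ^ j * θ2 →
          ∃ u : Fin (D 0) → ℝ,
            netPre D W (x + u) j = netPre D W x j + w ∧
            ∀ i : ℕ, i ≤ j →
              c2 ^ j * e2norm (netPre D W (x + u) i - netPre D W x i) ≤
                c2 ^ i * e2norm w := by
        intro j hj1
        induction j, hj1 using Nat.le_induction with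
        | base =>
          intro _ w hw
          have hps := hsurj 0 (by omega) univ (by
            rw [Finset.card_univ, Fintype.card_fin]
            nlinarith [(Nat.cast_nonneg (D 0) : (0:ℝ) ≤ (D 0 : ℝ))])
          obtain ⟨u, hu1, _, hu3⟩ := surj_support hc2 hps w
          refine ⟨u, ?_, ?_⟩
          · show (W 0).mulVec (x + u) = (W 0).mulVec x + w
            rw [mulVec_add, hu3]
          · intro i hi
            interval_cases i
            · show c2 ^ 1 * e2norm (x + u - x) ≤ c2 ^ 0 * e2norm w
              rw [add_sub_cancel_left, pow_one, pow_zero, one_mul]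
              rw [le_div_iff₀ hc2] at hu1
              linarith [hu1]
            · have heq : netPre D W (x + u) 1 = netPre D W x 1 + w := by
                show (W 0).mulVec (x + u) = (W 0).mulVec x + w
                rw [mulVec_add, hu3]
              rw [heq, add_sub_cancel_left]
        | succ j hj ih =>
          intro hjt1 w hw
          have hjt : j < t := by omega
          have hps := hsurj j hjt _ (by exact_mod_cast hAcard j hj hjt)
          obtain ⟨wj, hwj1, hwj2, hwj3⟩ := surj_support hc2 hps w
          have hwjn : e2norm wj ≤ c2 ^ j * θ2 := by
            refine hwj1.trans ?_
            rw [div_le_iff₀ hc2]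
            calc e2norm w ≤ c2 ^ (j + 1) * θ2 := hw
              _ = c2 ^ j * θ2 * c2 := by ring
          obtain ⟨u, hueq, hubd⟩ := ih (by omega) wj hwjn
          obtain ⟨m, rfl⟩ : ∃ m, j = m + 1 := ⟨j - 1, by omega⟩
          -- ReLU acts linearly on the perturbed coordinates
          have hrelu : relu (netPre D W x (m + 1) + wj) = relu (netPre D W x (m + 1)) + wj := by
            apply relu_add_eq
            intro r hr
            have hmem := mem_filter.1 (hwj2 r hr)
            obtain ⟨hg1, hg2⟩ := hmem.2
            have h3 : |wj r| ≤ θ2 := by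
              refine (abs_le_e2norm wj r).trans (hwjn.trans ?_)
              calc c2 ^ (m + 1) * θ2 ≤ 1 * θ2 :=
                    mul_le_mul_of_nonneg_right (pow_le_one₀ hc2.le hc2'.le) hθ2.le
                _ = θ2 := one_mul _
            have h4 := abs_le.1 hg2
            have h5 := abs_le.1 h3
            rw [hθeq] at hg1
            constructor
            · linarith [h4.1]
            · linarith [h4.1, h5.1]
          have hpost : netPost D W (x + u) (m + 1) = netPost D W x (m + 1) + wj := by
            show relu ((W m).mulVec (netPost D W (x + u) m)) = _
            have e1 : relu ((W m).mulVec (netPost D W (x + u) m)) =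
                relu (netPre D W (x + u) (m + 1)) := rfl
            have e2 : netPost D W x (m + 1) = relu (netPre D W x (m + 1)) := rfl
            rw [e1, hueq, hrelu, e2]
          refine ⟨u, ?_, ?_⟩
          · show (W (m + 1)).mulVec (netPost D W (x + u) (m + 1)) =
              (W (m + 1)).mulVec (netPost D W x (m + 1)) + w
            rw [hpost, mulVec_add, hwj3]
          · intro i hi
            rcases Nat.lt_or_ge i (m + 2) with hlt | hge
            · have h1 := hubd i (by omega)
              calc c2 ^ (m + 1 + 1) * e2norm (netPre D W (x + u) i - netPre D W x i)
                  = c2 * (c2 ^ (m + 1) * e2norm (netPre D W (x + u) i - netPre D W x i)) := by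
                    ring
                _ ≤ c2 * (c2 ^ i * e2norm wj) := mul_le_mul_of_nonneg_left h1 hc2.le
                _ ≤ c2 * (c2 ^ i * (e2norm w / c2)) := by
                    apply mul_le_mul_of_nonneg_left _ hc2.le
                    exact mul_le_mul_of_nonneg_left hwj1 (by positivity)
                _ = c2 ^ i * e2norm w := by field_simp
            · have hieq : i = m + 2 := by omega
              subst hieq
              have heq : netPre D W (x + u) (m + 2) = netPre D W x (m + 2) + w := by
                show (W (m + 1)).mulVec (netPost D W (x + u) (m + 1)) =
                  (W (m + 1)).mulVec (netPost D W x (m + 1)) + w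
                rw [hpost, mulVec_add, hwj3]
              rw [heq, add_sub_cancel_left]
      -- apply the inner construction with the constant target at the output layer
      have hsum1 : ∀ c : ℝ, (∑ _r : Fin (D t), c) = c := by
        intro c
        rw [Finset.sum_const, Finset.card_univ, Fintype.card_fin, hDt, one_smul]
      set w : Fin (D t) → ℝ := fun _ => -(η * s) with hwdef
      have hwnorm : e2norm w = η := by
        rw [hwdef]
        simp only [e2norm]
        rw [hsum1 ((-(η * s)) ^ 2), Real.sqrt_sq_eq_abs, abs_neg, abs_mul, hsabs,
          mul_one, abs_of_pos hη]
      obtain ⟨u, hueq, hubd⟩ := inner t (by omega) le_rfl w (le_of_eq (hwnorm.trans hηdef))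
      refine ⟨x + u, ?_, ?_⟩
      · intro i hit
        have tri : e2norm (netPre D W (x + u) i - netPre D W x0 i) ≤
            e2norm (netPre D W (x + u) i - netPre D W x i) +
            e2norm (netPre D W x i - netPre D W x0 i) := by
          have h := e2norm_add_le (netPre D W (x + u) i - netPre D W x i)
            (netPre D W x i - netPre D W x0 i)
          rwa [sub_add_sub_cancel] at h
        have h1 := hubd i hit
        rw [hwnorm] at h1
        have h2 := hxinv i hit
        push_cast
        calc c2 ^ t * e2norm (netPre D W (x + u) i - netPre D W x0 i)
            ≤ c2 ^ t * (e2norm (netPre D W (x + u) i - netPre D W x i) +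
                e2norm (netPre D W x i - netPre D W x0 i)) :=
              mul_le_mul_of_nonneg_left tri (by positivity)
          _ = c2 ^ t * e2norm (netPre D W (x + u) i - netPre D W x i) +
              c2 ^ t * e2norm (netPre D W x i - netPre D W x0 i) := mul_add _ _ _
          _ ≤ c2 ^ i * η + c2 ^ i * ((k : ℝ) * η) := add_le_add h1 h2
          _ = c2 ^ i * (((k : ℝ) + 1) * η) := by ring
      · simp only [netOut]
        rw [hueq]
        have hsplit : (∑ r, (netPre D W x t + w) r) =
            (∑ r, netPre D W x t r) + ∑ r, w r := by
          simp [Finset.sum_add_distrib]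
        rw [hsplit]
        have hsw : (∑ r, w r) = -(η * s) := by rw [hwdef]; exact hsum1 _
        rw [hsw]
        have hxout' : (∑ r, netPre D W x t r) = h0 - (k : ℝ) * η * s := hxout
        rw [hxout']
        push_cast
        ring
  -- final assembly
  obtain ⟨x', hinv, hout⟩ := main K le_rfl
  have hc2ne : c2 ≠ 0 := ne_of_gt hc2
  have hsdne : Real.sqrt (D 0) ≠ 0 := ne_of_gt hsd
  refine ⟨x', ?_, ?_⟩
  · have hdist := hinv 0 (Nat.zero_le t)
    have h0eq : netPre D W x' 0 - netPre D W x0 0 = x' - x0 := rfl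
    rw [h0eq, pow_zero, one_mul] at hdist
    have hKθ : (K : ℝ) * η = c2 ^ t * ((K : ℝ) * θ2) := by rw [hηdef]; ring
    rw [hKθ] at hdist
    have h6 : e2norm (x' - x0) ≤ (K : ℝ) * θ2 := (mul_le_mul_iff_right₀ (pow_pos hc2 t)).1 hdist
    have hsL : (1 : ℝ) / 2 ≤ Real.sqrt L := by
      rw [Real.le_sqrt (by norm_num) hL.le]
      nlinarith [hhalf]
    have hK2 : (K : ℝ) ≤ 2 * Real.sqrt L / c2 ^ (t + 1) + 1 := by linarith [hKlt, hK0]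
    calc e2norm (x' - x0) ≤ (K : ℝ) * θ2 := h6
      _ ≤ (2 * Real.sqrt L / c2 ^ (t + 1) + 1) * θ2 :=
          mul_le_mul_of_nonneg_right hK2 hθ2.le
      _ = 1 / c2 ^ t * n * Real.sqrt L / Real.sqrt (D 0) + θ2 := by
          rw [hθ2def, pow_succ]; field_simp
      _ ≤ 1 / c2 ^ t * n * Real.sqrt L / Real.sqrt (D 0) +
          1 * n * Real.sqrt L / Real.sqrt (D 0) := by
          have hθ2le : θ2 ≤ 1 * n * Real.sqrt L / Real.sqrt (D 0) := by
            rw [hθ2def, one_mul, div_le_div_iff₀ (by positivity) hsd]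
            nlinarith [mul_le_mul_of_nonneg_right hsL (mul_pos hn hsd).le,
              mul_le_mul_of_nonneg_right hc2'.le (mul_pos hn hsd).le]
          linarith
      _ = (1 / c2 ^ t + 1) * n * Real.sqrt L / Real.sqrt (D 0) := by ring
  · rw [hout]
    have e1 : h0 * (h0 - (K : ℝ) * η * s) = h0 * h0 - (K : ℝ) * η * (h0 * s) := by ring
    rw [e1, hs1, ← abs_mul_abs_self h0]
    have h7 : |h0| * |h0| ≤ (K : ℝ) * η * |h0| := by
      calc |h0| * |h0| ≤ |h0| * ((K : ℝ) * η) :=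
            mul_le_mul_of_nonneg_left hKle (abs_nonneg h0)
        _ = (K : ℝ) * η * |h0| := mul_comm _ _
    linarith
end
end

section
/- For every constant c1 ∈ (0,1) there exist constants c2, c > 0 (depending only on c1) such that the following holds for every positive integer d: if X_1,...,X_d are i.i.d. standard Gaussian random variables and Z denotes the sum of the ⌈c1·d⌉ smallest values among X_1², ..., X_d², then Pr(Z > c2·d) ≥ 1 − 2·exp(−c·d). -/
open MeasureTheory ProbabilityTheory Real Finset
open scoped NNReal ENNReal

noncomputable section

/-- The sum of the `m` smallest values among `X 1 ^ 2, …, X d ^ 2`: it equals the infimum,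
over all subsets `A` of size `m`, of the sum of `X i ^ 2` for `i ∈ A`. -/
def sumSmallestSquares {d : ℕ} (m : ℕ) (X : Fin d → ℝ) : ℝ :=
  sInf {s : ℝ | ∃ A : Finset (Fin d), A.card = m ∧ s = ∑ i ∈ A, X i ^ 2}

lemma gauss_sq_le (t : ℝ) :
    gaussianReal 0 1 {x : ℝ | x ^ 2 ≤ t} ≤ ENNReal.ofReal (Real.sqrt t) := by
  rw [gaussianReal_apply 0 one_ne_zero]
  have hsub : {x : ℝ | x ^ 2 ≤ t} ⊆ Set.Icc (-Real.sqrt t) (Real.sqrt t) := by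
    intro x hx
    have hx' : |x| ≤ Real.sqrt t := by
      rw [← Real.sqrt_sq_eq_abs]
      exact Real.sqrt_le_sqrt (by simpa using hx)
    exact abs_le.mp hx'
  calc ∫⁻ x in {x : ℝ | x ^ 2 ≤ t}, gaussianPDF 0 1 x
      ≤ ∫⁻ x in Set.Icc (-Real.sqrt t) (Real.sqrt t), gaussianPDF 0 1 x :=
        lintegral_mono_set hsub
    _ ≤ ∫⁻ _ in Set.Icc (-Real.sqrt t) (Real.sqrt t), ENNReal.ofReal (1/2) := by
        refine lintegral_mono fun x => ?_
        unfold gaussianPDF gaussianPDFReal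
        apply ENNReal.ofReal_le_ofReal
        simp only [NNReal.coe_one, mul_one]
        have h1 : rexp (-(x - 0) ^ 2 / 2) ≤ 1 := by
          rw [Real.exp_le_one_iff]
          nlinarith [sq_nonneg (x - 0)]
        have h4 : (2:ℝ) ≤ Real.sqrt (2 * π) := by
          nlinarith [Real.sq_sqrt (show (0:ℝ) ≤ 2 * π by positivity),
            Real.sqrt_nonneg (2 * π), Real.pi_gt_three]
        have h2 : (Real.sqrt (2 * π))⁻¹ ≤ 1/2 := by
          rw [inv_le_comm₀ (by linarith) (by norm_num)]
          linarith
        have h3 : (0:ℝ) ≤ (Real.sqrt (2 * π))⁻¹ := by positivity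
        nlinarith [Real.exp_pos (-(x - 0) ^ 2 / 2)]
    _ = ENNReal.ofReal (1/2) * volume (Set.Icc (-Real.sqrt t) (Real.sqrt t)) :=
        setLIntegral_const _ _
    _ ≤ ENNReal.ofReal (Real.sqrt t) := by
        rw [Real.volume_Icc, ← ENNReal.ofReal_mul (by norm_num)]
        apply ENNReal.ofReal_le_ofReal
        ring_nf
        nlinarith [Real.sqrt_nonneg t]

lemma cyl_measure {d : ℕ} (t : ℝ) (S : Finset (Fin d)) :
    (Measure.pi fun _ : Fin d => gaussianReal 0 1) {X : Fin d → ℝ | ∀ i ∈ S, X i ^ 2 ≤ t}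
      = gaussianReal 0 1 {x : ℝ | x ^ 2 ≤ t} ^ S.card := by
  have hset : {X : Fin d → ℝ | ∀ i ∈ S, X i ^ 2 ≤ t}
      = Set.pi Set.univ (fun i => if i ∈ S then {x : ℝ | x ^ 2 ≤ t} else Set.univ) := by
    ext X
    simp only [Set.mem_setOf_eq, Set.mem_pi, Set.mem_univ, true_implies]
    constructor
    · intro h i
      by_cases hi : i ∈ S <;> simp [hi, h i]
    · intro h i hi
      have := h i
      simpa [hi] using this
  rw [hset, Measure.pi_pi]
  have : ∀ i : Fin d, gaussianReal 0 1 (if i ∈ S then {x : ℝ | x ^ 2 ≤ t} else Set.univ)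
      = if i ∈ S then gaussianReal 0 1 {x : ℝ | x ^ 2 ≤ t} else 1 := by
    intro i
    by_cases hi : i ∈ S <;> simp [hi]
  simp_rw [this]
  rw [Finset.prod_ite_mem, Finset.univ_inter, Finset.prod_const]

lemma exists_small_subset {d m k : ℕ} {t c2 : ℝ} (ht : 0 < t)
    (hmd : m ≤ d) (hk : k = m - m / 2) (hc2 : c2 * d ≤ (m : ℝ) / 2 * t)
    {X : Fin d → ℝ} (hX : sumSmallestSquares m X ≤ c2 * d) :
    ∃ S : Finset (Fin d), S.card = k ∧ ∀ i ∈ S, X i ^ 2 ≤ t := by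
  classical
  set 𝒮 := {s : ℝ | ∃ A : Finset (Fin d), A.card = m ∧ s = ∑ i ∈ A, X i ^ 2} with h𝒮
  obtain ⟨A₀, -, hA₀⟩ := Finset.exists_subset_card_eq
    (show m ≤ (Finset.univ : Finset (Fin d)).card by simpa using hmd)
  have hne : 𝒮.Nonempty := ⟨∑ i ∈ A₀, X i ^ 2, A₀, hA₀, rfl⟩
  have hfin : 𝒮.Finite := by
    have : 𝒮 = (fun A : Finset (Fin d) => ∑ i ∈ A, X i ^ 2) '' {A | A.card = m} := by
      ext s
      simp only [h𝒮, Set.mem_setOf_eq, Set.mem_image]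
      exact ⟨fun ⟨A, h1, h2⟩ => ⟨A, h1, h2.symm⟩, fun ⟨A, h1, h2⟩ => ⟨A, h1, h2.symm⟩⟩
    rw [this]
    exact (Set.toFinite _).image _
  obtain ⟨A, hAcard, hAsum⟩ := hne.csInf_mem hfin
  have hAle : ∑ i ∈ A, X i ^ 2 ≤ c2 * d := by
    rw [← hAsum]; exact hX
  set B := A.filter (fun i => X i ^ 2 ≤ t) with hB
  have hBsub : B ⊆ A := Finset.filter_subset _ _
  -- bound the number of large coordinates
  have hbig : ∀ i ∈ A \ B, t ≤ X i ^ 2 := by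
    intro i hi
    simp only [hB, Finset.mem_sdiff, Finset.mem_filter] at hi
    push_neg at hi
    exact le_of_lt (hi.2 hi.1)
  have hsum1 : ((A \ B).card : ℝ) * t ≤ ∑ i ∈ A \ B, X i ^ 2 := by
    calc ((A \ B).card : ℝ) * t = ∑ _i ∈ A \ B, t := by rw [Finset.sum_const, nsmul_eq_mul]
      _ ≤ ∑ i ∈ A \ B, X i ^ 2 := Finset.sum_le_sum hbig
  have hsum2 : ∑ i ∈ A \ B, X i ^ 2 ≤ ∑ i ∈ A, X i ^ 2 :=
    Finset.sum_le_sum_of_subset_of_nonneg (Finset.sdiff_subset)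
      (fun i _ _ => sq_nonneg _)
  have hcard_real : ((A \ B).card : ℝ) * t ≤ (m : ℝ) / 2 * t := by
    calc ((A \ B).card : ℝ) * t ≤ ∑ i ∈ A, X i ^ 2 := le_trans hsum1 hsum2
      _ ≤ c2 * d := hAle
      _ ≤ (m : ℝ) / 2 * t := hc2
  have hcard_real' : ((A \ B).card : ℝ) ≤ (m : ℝ) / 2 :=
    le_of_mul_le_mul_right (by linarith) ht
  have hcard_nat : (A \ B).card ≤ m / 2 := by
    rw [Nat.le_div_iff_mul_le (by norm_num)]
    have : ((A \ B).card * 2 : ℝ) ≤ m := by linarith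
    exact_mod_cast this
  have hBcard : k ≤ B.card := by
    have h1 : (A \ B).card + B.card = A.card := Finset.card_sdiff_add_card_eq_card hBsub
    omega
  obtain ⟨S, hSB, hScard⟩ := Finset.exists_subset_card_eq hBcard
  refine ⟨S, hScard, fun i hi => ?_⟩
  have := hSB hi
  simp only [hB, Finset.mem_filter] at this
  exact this.2

/-- Lemma 2 in the paper: for every `c1 ∈ (0,1)` there are `c2, c > 0` so
that if `X_1, …, X_d` are i.i.d. standard Gaussians and `Z` is the sum of the `⌈c1·d⌉`
smallest values among the `X_i ^ 2`, then `Z > c2·d` with probability `≥ 1 - 2·exp(-c·d)`. -/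
theorem stmt5 (c1 : ℝ) (hc1 : 0 < c1) (hc1' : c1 < 1) :
    ∃ c2 c : ℝ, 0 < c2 ∧ 0 < c ∧
      ∀ d : ℕ, 0 < d →
        ENNReal.ofReal (1 - 2 * Real.exp (-c * d)) ≤
          (Measure.pi fun _ : Fin d => gaussianReal 0 1)
            {X | c2 * d < sumSmallestSquares (Nat.ceil (c1 * d)) X} := by
  classical
  set t : ℝ := rexp (-(8 * Real.log 2) / c1) with ht_def
  have ht : 0 < t := Real.exp_pos _
  have hlog2 : 0 < Real.log 2 := Real.log_pos one_lt_two
  refine ⟨c1 * t / 2, Real.log 2, by positivity, hlog2, fun d hd => ?_⟩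
  set μ := (Measure.pi fun _ : Fin d => gaussianReal 0 1) with hμ
  have hdpos : (0:ℝ) < d := by exact_mod_cast hd
  set m := Nat.ceil (c1 * d) with hm
  set k := m - m / 2 with hk
  have hmd : m ≤ d := Nat.ceil_le.mpr (by nlinarith)
  have hmle : (c1 * d) ≤ m := Nat.le_ceil _
  have hkd : k ≤ d := le_trans (Nat.sub_le _ _) hmd
  have hkreal : c1 * d / 2 ≤ (k : ℝ) := by
    have h1 : ((m / 2 : ℕ) : ℝ) ≤ (m : ℝ) / 2 := Nat.cast_div_le
    have h2 : (k : ℝ) = (m : ℝ) - ((m / 2 : ℕ) : ℝ) := by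
      rw [hk, Nat.cast_sub (Nat.div_le_self _ _)]
    nlinarith
  -- the bad event is contained in a union of cylinders
  set good := {X : Fin d → ℝ | c1 * t / 2 * d < sumSmallestSquares m X} with hgood
  set U := ⋃ S ∈ (Finset.univ : Finset (Fin d)).powersetCard k,
      {X : Fin d → ℝ | ∀ i ∈ S, X i ^ 2 ≤ t} with hU
  have hsub : goodᶜ ⊆ U := by
    intro X hXc
    have hXle : sumSmallestSquares m X ≤ c1 * t / 2 * d := not_lt.mp hXc
    obtain ⟨S, hScard, hSsmall⟩ := exists_small_subset ht hmd hk
      (show c1 * t / 2 * d ≤ (m : ℝ) / 2 * t by nlinarith) hXle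
    exact Set.mem_iUnion₂.mpr
      ⟨S, Finset.mem_powersetCard.mpr ⟨Finset.subset_univ S, hScard⟩, hSsmall⟩
  -- bound the measure of the union
  have hchoose : (d.choose k : ℝ≥0∞) ≤ (2 : ℝ≥0∞) ^ d := by
    have h1 : d.choose k ≤ 2 ^ d := by
      rw [← Nat.sum_range_choose d]
      exact Finset.single_le_sum (fun i _ => Nat.zero_le _)
        (Finset.mem_range.mpr (Nat.lt_succ_of_le hkd))
    exact_mod_cast h1
  have hUmeas : μ U ≤ ENNReal.ofReal (2 * rexp (-(Real.log 2) * d)) := by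
    have h1 : μ U ≤ ∑ S ∈ (Finset.univ : Finset (Fin d)).powersetCard k,
        μ {X : Fin d → ℝ | ∀ i ∈ S, X i ^ 2 ≤ t} := measure_biUnion_finset_le _ _
    have h2 : ∀ S ∈ (Finset.univ : Finset (Fin d)).powersetCard k,
        μ {X : Fin d → ℝ | ∀ i ∈ S, X i ^ 2 ≤ t} ≤ ENNReal.ofReal (Real.sqrt t) ^ k := by
      intro S hS
      rw [hμ, cyl_measure]
      have hScard : S.card = k := (Finset.mem_powersetCard.mp hS).2
      rw [hScard]
      exact pow_le_pow_left' (gauss_sq_le t) k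
    calc μ U ≤ ∑ S ∈ (Finset.univ : Finset (Fin d)).powersetCard k,
          μ {X : Fin d → ℝ | ∀ i ∈ S, X i ^ 2 ≤ t} := h1
      _ ≤ ∑ _S ∈ (Finset.univ : Finset (Fin d)).powersetCard k,
          ENNReal.ofReal (Real.sqrt t) ^ k := Finset.sum_le_sum h2
      _ = (d.choose k : ℝ≥0∞) * ENNReal.ofReal (Real.sqrt t) ^ k := by
          rw [Finset.sum_const, nsmul_eq_mul]
          congr 2
          rw [Finset.card_powersetCard, Finset.card_univ, Fintype.card_fin]
      _ ≤ (2:ℝ≥0∞) ^ d * ENNReal.ofReal (Real.sqrt t) ^ k := by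
          exact mul_le_mul_left hchoose _
      _ = ENNReal.ofReal (2 ^ d * Real.sqrt t ^ k) := by
          rw [ENNReal.ofReal_mul (by positivity), ENNReal.ofReal_pow (by norm_num : (0:ℝ) ≤ 2),
            ENNReal.ofReal_pow (Real.sqrt_nonneg t), ENNReal.ofReal_ofNat]
      _ ≤ ENNReal.ofReal (2 * rexp (-(Real.log 2) * d)) := by
          apply ENNReal.ofReal_le_ofReal
          have hsqrt : Real.sqrt t = rexp (-(8 * Real.log 2) / c1 / 2) := by
            rw [ht_def, ← Real.exp_half]
          have h2d : (2:ℝ) ^ d = rexp (d * Real.log 2) := by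
            rw [Real.exp_nat_mul, Real.exp_log (by norm_num : (0:ℝ) < 2)]
          rw [hsqrt, h2d, ← Real.exp_nat_mul, ← Real.exp_add]
          have hkexp : (k : ℝ) * (-(8 * Real.log 2) / c1 / 2) ≤ -(2 * Real.log 2) * d := by
            have hcoef : -(8 * Real.log 2) / c1 / 2 < 0 := by
              apply div_neg_of_neg_of_pos _ (by norm_num)
              apply div_neg_of_neg_of_pos _ hc1
              nlinarith
            have := mul_le_mul_of_nonpos_right hkreal (le_of_lt hcoef)
            calc (k:ℝ) * (-(8 * Real.log 2) / c1 / 2)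
                ≤ c1 * d / 2 * (-(8 * Real.log 2) / c1 / 2) := this
              _ = -(2 * Real.log 2) * d := by field_simp; ring
          calc rexp (d * Real.log 2 + k * (-(8 * Real.log 2) / c1 / 2))
              ≤ rexp (d * Real.log 2 + -(2 * Real.log 2) * d) := by
                apply Real.exp_le_exp.mpr; linarith
            _ = rexp (-(Real.log 2) * d) := by ring_nf
            _ ≤ 2 * rexp (-(Real.log 2) * d) := by
                nlinarith [Real.exp_pos (-(Real.log 2) * (d:ℝ))]
  -- conclude
  have hprob : IsProbabilityMeasure μ := by rw [hμ]; infer_instance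
  have h1 : (1 : ℝ≥0∞) ≤ μ good + μ U := by
    calc (1 : ℝ≥0∞) = μ Set.univ := (measure_univ).symm
      _ = μ (good ∪ goodᶜ) := by rw [Set.union_compl_self]
      _ ≤ μ good + μ goodᶜ := measure_union_le _ _
      _ ≤ μ good + μ U := add_le_add_right (measure_mono hsub) _
  set e : ℝ := 2 * rexp (-(Real.log 2) * d) with he
  rcases le_total 1 e with hle | hle
  · have : ENNReal.ofReal (1 - e) = 0 := by
      rw [ENNReal.ofReal_eq_zero]; linarith
    rw [this]; exact bot_le
  · have h2 : (1 : ℝ≥0∞) ≤ μ good + ENNReal.ofReal e :=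
      le_trans h1 (add_le_add_right hUmeas _)
    have h3 : ENNReal.ofReal (1 - e) + ENNReal.ofReal e = 1 := by
      rw [← ENNReal.ofReal_add (by linarith) (by positivity)]
      norm_num
    have h4 : ENNReal.ofReal (1 - e) + ENNReal.ofReal e ≤ μ good + ENNReal.ofReal e := by
      rw [h3]; exact h2
    exact (ENNReal.add_le_add_iff_right ENNReal.ofReal_ne_top).mp h4
end
end

section
/- Let h : ℝ^d → ℝ be continuously differentiable, let x0 ∈ ℝ^d, and let c, r > 0 be such that ‖∇h(x)‖ ≥ c for every x in the closed ball of radius r centered at x0, and such that 0 < h(x0) < c·r. Then there exists x' ∈ ℝ^d with ‖x' − x0‖ ≤ r and h(x') ≤ 0. -/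
open Metric

noncomputable section

/-- analytic core of the gradient-flow argument: if `h` is `C¹`,
`‖∇h‖ ≥ c` on the closed ball of radius `r` around `x0`, and `0 < h(x0) < c·r`, then there
is a point `x'` within distance `r` of `x0` with `h(x') ≤ 0`. -/
theorem stmt10 {d : ℕ} (h : EuclideanSpace ℝ (Fin d) → ℝ) (hh : ContDiff ℝ 1 h)
    (x0 : EuclideanSpace ℝ (Fin d)) (c r : ℝ) (hc : 0 < c) (hr : 0 < r)
    (hgrad : ∀ x ∈ closedBall x0 r, c ≤ ‖gradient h x‖)
    (hpos : 0 < h x0) (hsmall : h x0 < c * r) :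
    ∃ x' : EuclideanSpace ℝ (Fin d), ‖x' - x0‖ ≤ r ∧ h x' ≤ 0 := by
  -- choose c' with h x0 / r < c' < c
  set c' : ℝ := (h x0 / r + c) / 2 with hc'def
  have hx0r : h x0 / r < c := (div_lt_iff₀ hr).2 hsmall
  have hc'lt : c' < c := by
    rw [hc'def]; linarith
  have hc'gt : h x0 / r < c' := by
    rw [hc'def]; linarith
  have hc'pos : 0 < c' := lt_trans (div_pos hpos hr) hc'gt
  have hx0lt : h x0 < c' * r := (div_lt_iff₀ hr).1 hc'gt
  -- minimize f = h + c' * ‖· - x0‖ over the closed ball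
  set f : EuclideanSpace ℝ (Fin d) → ℝ := fun x => h x + c' * ‖x - x0‖ with hfdef
  have hfc : Continuous f := by
    exact hh.continuous.add (continuous_const.mul ((continuous_id.sub continuous_const).norm))
  obtain ⟨z, hzball, hzmin⟩ := (isCompact_closedBall x0 r).exists_isMinOn
    (nonempty_closedBall.2 hr.le) hfc.continuousOn
  refine ⟨z, mem_closedBall_iff_norm.1 hzball, ?_⟩
  by_contra hhz
  push_neg at hhz
  -- z is in the open ball
  have hfz : f z ≤ f x0 := hzmin (mem_closedBall_self hr.le)
  have hfx0 : f x0 = h x0 := by simp [hfdef]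
  have hzlt : ‖z - x0‖ < r := by
    have h1 : c' * ‖z - x0‖ < c' * r := by
      have : c' * ‖z - x0‖ ≤ f z := by
        simp only [hfdef]; linarith
      linarith [hfz, hfx0, hx0lt]
    exact lt_of_mul_lt_mul_left h1 hc'pos.le
  -- the gradient at z is nonzero
  have hgz : c ≤ ‖gradient h z‖ := hgrad z hzball
  have hgz0 : gradient h z ≠ 0 := by
    intro hcon; rw [hcon, norm_zero] at hgz; linarith
  set v : EuclideanSpace ℝ (Fin d) := -(‖gradient h z‖⁻¹ • gradient h z) with hvdef
  have hvnorm : ‖v‖ = 1 := by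
    rw [hvdef, norm_neg, norm_smul, norm_inv, norm_norm]
    exact inv_mul_cancel₀ (norm_ne_zero_iff.2 hgz0)
  -- derivative of t ↦ h (z + t • v) at 0
  have hdiff : DifferentiableAt ℝ h z := (hh.differentiable one_ne_zero) z
  have hline : HasDerivAt (fun t : ℝ => z + t • v) v 0 := by
    simpa using ((hasDerivAt_id (0:ℝ)).smul_const v).const_add z
  have hcomp : HasDerivAt (fun t : ℝ => h (z + t • v)) ((fderiv ℝ h z) v) 0 := by
    have hF : HasFDerivAt h (fderiv ℝ h z) (z + (0:ℝ) • v) := by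
      simpa using hdiff.hasFDerivAt
    exact hF.comp_hasDerivAt (0:ℝ) hline
  have hfderiv_eq : (fderiv ℝ h z) v = -‖gradient h z‖ := by
    have h1 : (fderiv ℝ h z) v = inner ℝ (gradient h z) v := by
      rw [show fderiv ℝ h z = InnerProductSpace.toDual ℝ _ (gradient h z) by
        rw [gradient]; exact ((InnerProductSpace.toDual ℝ _).apply_symm_apply _).symm]
      exact InnerProductSpace.toDual_apply_apply
    rw [h1, hvdef, inner_neg_right, real_inner_smul_right, real_inner_self_eq_norm_sq]
    field_simp [pow_two]
  -- g t := h (z + t • v) + c' * (‖z - x0‖ + t) has negative derivative at 0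
  set g : ℝ → ℝ := fun t => h (z + t • v) + c' * (‖z - x0‖ + t) with hgdef
  have hg0 : g 0 = f z := by simp [hgdef, hfdef]
  have hgderiv : HasDerivAt g (-‖gradient h z‖ + c') 0 := by
    rw [← hfderiv_eq]
    have h2 : HasDerivAt (fun t : ℝ => c' * (‖z - x0‖ + t)) c' 0 := by
      simpa using (((hasDerivAt_id (0:ℝ)).const_add ‖z - x0‖).const_mul c')
    exact hcomp.add h2
  have hneg : -‖gradient h z‖ + c' < 0 := by linarith
  -- get a small t > 0 with g t < g 0 and z + t • v in the ball
  have hslope := hgderiv.hasDerivWithinAt (s := Set.Ioi (0:ℝ))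
  rw [hasDerivWithinAt_iff_tendsto_slope] at hslope
  have hmem : {u : ℝ | slope g 0 u < 0} ∈ nhdsWithin 0 (Set.Ioi (0:ℝ) \ {0}) :=
    hslope (Iio_mem_nhds hneg)
  have hsmallmem : Set.Ioo (0:ℝ) (r - ‖z - x0‖) ∈ nhdsWithin 0 (Set.Ioi (0:ℝ) \ {0}) := by
    apply mem_nhdsWithin.2
    refine ⟨Set.Iio (r - ‖z - x0‖), isOpen_Iio, by simpa using sub_pos.2 hzlt, ?_⟩
    rintro u ⟨hu1, hu2, _⟩
    exact ⟨hu2, hu1⟩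
  have hne : (nhdsWithin (0:ℝ) (Set.Ioi (0:ℝ) \ {0})).NeBot := by
    rw [Set.diff_eq, show Set.Ioi (0:ℝ) ∩ {0}ᶜ = Set.Ioi 0 by
      ext u; simp (config := { contextual := true }) [ne_of_gt]]
    infer_instance
  haveI := hne
  obtain ⟨t, hslopet, ht0, htr⟩ := Filter.nonempty_of_mem (Filter.inter_mem hmem hsmallmem)
  have hgt : g t < g 0 := by
    have hs : t⁻¹ * (g t - g 0) < 0 := by
      have := hslopet
      simp only [Set.mem_setOf_eq, slope, vsub_eq_sub, smul_eq_mul, sub_zero] at this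
      exact this
    by_contra hge
    push_neg at hge
    exact absurd hs (not_lt.2 (mul_nonneg (inv_pos.2 ht0).le (by linarith)))
  -- z + t • v lies in the closed ball and f (z + t•v) ≤ g t
  have hnormle : ‖z + t • v - x0‖ ≤ ‖z - x0‖ + t := by
    calc ‖z + t • v - x0‖ = ‖(z - x0) + t • v‖ := by rw [add_sub_right_comm]
      _ ≤ ‖z - x0‖ + ‖t • v‖ := norm_add_le _ _
      _ = ‖z - x0‖ + t := by rw [norm_smul, hvnorm, Real.norm_eq_abs, abs_of_pos ht0, mul_one]
  have hmemball : z + t • v ∈ closedBall x0 r := by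
    rw [mem_closedBall_iff_norm]
    linarith
  have hfle : f (z + t • v) ≤ g t := by
    simp only [hfdef, hgdef]
    have := mul_le_mul_of_nonneg_left hnormle hc'pos.le
    linarith
  have := hzmin hmemball
  rw [hg0] at hgt
  simp only [Set.mem_setOf_eq] at this
  have : f z ≤ f (z + t • v) := this
  linarith
end
end

section
/- Let d, m be positive integers, and let x, x', w ∈ ℝ^d satisfy: |w_i| ≤ 1/√d for every coordinate i, wᵀx ≥ 1, wᵀx' ≤ 0, and x' differs from x in at most m coordinates. Then max_i |x_i − x'_i| ≥ √d / m. -/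
open Finset

noncomputable section

/-- Example 1 in the paper: if `|w_i| ≤ 1/√d`, `wᵀx ≥ 1`, `wᵀx' ≤ 0`,
and `x'` differs from `x` in at most `m` coordinates, then some coordinate moved by at
least `√d / m`. -/
theorem stmt13 (d m : ℕ) (hd : 0 < d) (hm : 0 < m) (x x' w : Fin d → ℝ)
    (hw : ∀ i, |w i| ≤ 1 / Real.sqrt d)
    (hx : 1 ≤ ∑ i, w i * x i) (hx' : ∑ i, w i * x' i ≤ 0)
    (hdiff : (univ.filter fun i => x i ≠ x' i).card ≤ m) :
    ∃ i, Real.sqrt d / m ≤ |x i - x' i| := by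
  have hsd : 0 < Real.sqrt d := Real.sqrt_pos.2 (by exact_mod_cast hd)
  have hne : (univ : Finset (Fin d)).Nonempty := univ_nonempty_iff.2 ⟨⟨0, hd⟩⟩
  obtain ⟨i, _, hi⟩ := exists_max_image univ (fun j => |x j - x' j|) hne
  refine ⟨i, ?_⟩
  set S := univ.filter fun j => x j ≠ x' j with hS
  have h1 : (1 : ℝ) ≤ ∑ j, w j * (x j - x' j) := by
    simp only [mul_sub, Finset.sum_sub_distrib]
    linarith
  have h2 : ∑ j, w j * (x j - x' j) = ∑ j ∈ S, w j * (x j - x' j) := by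
    rw [hS, Finset.sum_filter_of_ne]
    intro j _ h
    intro heq
    apply h
    rw [heq, sub_self, mul_zero]
  have h3 : ∑ j ∈ S, w j * (x j - x' j) ≤ ∑ j ∈ S, (1 / Real.sqrt d) * |x i - x' i| := by
    apply Finset.sum_le_sum
    intro j _
    calc w j * (x j - x' j) ≤ |w j * (x j - x' j)| := le_abs_self _
      _ = |w j| * |x j - x' j| := abs_mul _ _
      _ ≤ (1 / Real.sqrt d) * |x i - x' i| := by
          apply mul_le_mul (hw j) (hi j (mem_univ j)) (abs_nonneg _)
          positivity
  have h4 : ∑ j ∈ S, (1 / Real.sqrt d) * |x i - x' i| =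
      S.card * ((1 / Real.sqrt d) * |x i - x' i|) := by
    rw [Finset.sum_const, nsmul_eq_mul]
  have hcard : (S.card : ℝ) ≤ m := by exact_mod_cast hdiff
  have habs : 0 ≤ |x i - x' i| := abs_nonneg _
  have h5 : (1 : ℝ) ≤ m * ((1 / Real.sqrt d) * |x i - x' i|) := by
    have := h1.trans (h2.le.trans (h3.trans h4.le))
    have hmono : (S.card : ℝ) * ((1 / Real.sqrt d) * |x i - x' i|) ≤
        m * ((1 / Real.sqrt d) * |x i - x' i|) := by
      apply mul_le_mul_of_nonneg_right hcard
      positivity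
    linarith
  rw [div_le_iff₀ (by exact_mod_cast hm)]
  calc Real.sqrt d = Real.sqrt d * 1 := (mul_one _).symm
    _ ≤ Real.sqrt d * (m * ((1 / Real.sqrt d) * |x i - x' i|)) := by
        exact mul_le_mul_of_nonneg_left h5 hsd.le
    _ = |x i - x' i| * m := by field_simp
end
end

section
/- There exists a constant c > 0 such that for every positive integer k and every σ > 0: if g_1, ..., g_k are i.i.d. Gaussian random variables with mean 0 and variance σ², then with probability at least 1 − 2·exp(−c·k), it holds that σ²·k/4 ≤ Σ_{i=1}^{k} max(g_i, 0)² ≤ σ²·k. -/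
open MeasureTheory ProbabilityTheory Real Finset
open scoped ENNReal NNReal

noncomputable section

/-- Lintegral of a product of one-variable functions over a finite product of copies of a
measure equals the power of the one-dimensional lintegral. -/
lemma lintegral_pi_prod_pow (μ : Measure ℝ) [SigmaFinite μ] (f : ℝ → ℝ≥0∞)
    (hf : Measurable f) :
    ∀ k : ℕ, ∫⁻ x : Fin k → ℝ, ∏ i, f (x i) ∂(Measure.pi fun _ => μ)
      = (∫⁻ x, f x ∂μ) ^ k := by
  intro k
  induction k with
  | zero => simp [lintegral_const, Measure.pi_univ]
  | succ n ih =>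
    have hm : Measurable fun x : Fin (n + 1) → ℝ => ∏ i, f (x i) :=
      Finset.measurable_prod _ fun i _ => hf.comp (measurable_pi_apply i)
    have h := (measurePreserving_piFinSuccAbove (fun _ : Fin (n + 1) => μ) 0).symm
    rw [← h.lintegral_comp hm]
    simp only [MeasurableEquiv.piFinSuccAbove_symm_apply, Fin.insertNthEquiv,
      Equiv.coe_fn_mk, Fin.insertNth_zero, Fin.prod_univ_succ, Fin.cons_zero, Fin.cons_succ,
      Fin.zero_succAbove, cast_eq]
    have hm2 : Measurable fun y : Fin n → ℝ => ∏ i, f (y i) :=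
      Finset.measurable_prod _ fun i _ => hf.comp (measurable_pi_apply i)
    rw [lintegral_prod_mul (f := f) (g := fun y : Fin n → ℝ => ∏ i, f (y i))
      hf.aemeasurable hm2.aemeasurable, ih, pow_succ, mul_comm]

/-- The Gaussian integral of `exp (t * (max x 0)^2)` where `t = 1/(2v) - b` with `b > 0`. -/
lemma gauss_relu_lintegral {v : ℝ≥0} (hv : 0 < (v : ℝ)) {t b : ℝ} (hb : 0 < b)
    (htb : t = 1 / (2 * v) - b) :
    ∫⁻ x, ENNReal.ofReal (rexp (t * max x 0 ^ 2)) ∂(gaussianReal 0 v)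
      = ENNReal.ofReal (1 / 2 + 1 / (2 * Real.sqrt (2 * v * b))) := by
  have hvne : v ≠ 0 := by
    intro h; rw [h] at hv; simp at hv
  have ha : (0 : ℝ) < 1 / (2 * v) := by positivity
  set a : ℝ := 1 / (2 * v) with ha_def
  have hmeas : Measurable fun x : ℝ => ENNReal.ofReal (rexp (t * max x 0 ^ 2)) :=
    (((measurable_id.max measurable_const).pow_const 2).const_mul t).exp.ennreal_ofReal
  rw [gaussianReal_of_var_ne_zero 0 hvne,
    lintegral_withDensity_eq_lintegral_mul _ (measurable_gaussianPDF 0 v) hmeas]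
  have hGdef : ∀ x : ℝ, gaussianPDFReal 0 v x * rexp (t * max x 0 ^ 2)
      = (Real.sqrt (2 * π * v))⁻¹ * rexp (-a * x ^ 2 + t * max x 0 ^ 2) := by
    intro x
    rw [gaussianPDFReal, mul_assoc, ← Real.exp_add]
    congr 2
    field_simp [ha_def]
    have h2a : 2 * (v:ℝ) * a = 1 := by rw [ha_def]; field_simp [hv.ne']
    linear_combination x ^ 2 * h2a
  -- integrability
  have hcont : Continuous fun x : ℝ => rexp (-a * x ^ 2 + t * max x 0 ^ 2) := by
    continuity
  have hHint : Integrable fun x : ℝ => rexp (-a * x ^ 2 + t * max x 0 ^ 2) := by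
    have hmin : 0 < min a b := lt_min ha hb
    refine (integrable_exp_neg_mul_sq hmin).mono hcont.aestronglyMeasurable ?_
    refine Filter.Eventually.of_forall fun x => ?_
    rw [Real.norm_eq_abs, Real.norm_eq_abs, abs_of_pos (Real.exp_pos _),
      abs_of_pos (Real.exp_pos _)]
    apply Real.exp_le_exp.2
    rcases le_total x 0 with hx | hx
    · rw [max_eq_right hx]
      have h1 : min a b ≤ a := min_le_left _ _
      nlinarith [sq_nonneg x]
    · rw [max_eq_left hx]
      have h1 : min a b ≤ b := min_le_right _ _
      have h2 : t = a - b := htb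
      nlinarith [sq_nonneg x]
  have hGint : Integrable fun x : ℝ => gaussianPDFReal 0 v x * rexp (t * max x 0 ^ 2) := by
    simp_rw [hGdef]
    exact hHint.const_mul _
  have hGnn : 0 ≤ᵐ[volume] fun x : ℝ => gaussianPDFReal 0 v x * rexp (t * max x 0 ^ 2) :=
    Filter.Eventually.of_forall fun x =>
      mul_nonneg (gaussianPDFReal_nonneg 0 v x) (Real.exp_pos _).le
  calc ∫⁻ x, (gaussianPDF 0 v * fun x => ENNReal.ofReal (rexp (t * max x 0 ^ 2))) x
      = ∫⁻ x, ENNReal.ofReal (gaussianPDFReal 0 v x * rexp (t * max x 0 ^ 2)) := by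
        refine lintegral_congr fun x => ?_
        simp only [Pi.mul_apply, gaussianPDF]
        rw [← ENNReal.ofReal_mul (gaussianPDFReal_nonneg 0 v x)]
    _ = ENNReal.ofReal (∫ x, gaussianPDFReal 0 v x * rexp (t * max x 0 ^ 2)) :=
        (ofReal_integral_eq_lintegral_ofReal hGint hGnn).symm
    _ = ENNReal.ofReal (1 / 2 + 1 / (2 * Real.sqrt (2 * v * b))) := by
        congr 1
        simp_rw [hGdef]
        rw [integral_const_mul]
        have hsplit : (∫ x in Set.Iic 0, rexp (-a * x ^ 2 + t * max x 0 ^ 2))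
            + (∫ x in Set.Ioi 0, rexp (-a * x ^ 2 + t * max x 0 ^ 2))
            = ∫ x, rexp (-a * x ^ 2 + t * max x 0 ^ 2) :=
          intervalIntegral.integral_Iic_add_Ioi hHint.integrableOn hHint.integrableOn
        rw [← hsplit]
        have hleft : (∫ x in Set.Iic 0, rexp (-a * x ^ 2 + t * max x 0 ^ 2))
            = Real.sqrt (π / a) / 2 := by
          have h1 : (∫ x in Set.Iic 0, rexp (-a * x ^ 2 + t * max x 0 ^ 2))
              = ∫ x in Set.Iic 0, rexp (-a * x ^ 2) := by
            refine setIntegral_congr_fun measurableSet_Iic fun x hx => ?_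
            rw [Set.mem_Iic] at hx
            rw [max_eq_right hx]
            norm_num
          have h2 : (∫ x in Set.Iic 0, rexp (-a * x ^ 2))
              = ∫ x in Set.Ioi (0:ℝ), rexp (-a * x ^ 2) := by
            have := integral_comp_neg_Iic (0 : ℝ) fun x => rexp (-a * x ^ 2)
            simp only [neg_sq, neg_zero] at this
            rw [← this]
          rw [h1, h2, integral_gaussian_Ioi]
        have hright : (∫ x in Set.Ioi 0, rexp (-a * x ^ 2 + t * max x 0 ^ 2))
            = Real.sqrt (π / b) / 2 := by
          have h1 : (∫ x in Set.Ioi 0, rexp (-a * x ^ 2 + t * max x 0 ^ 2))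
              = ∫ x in Set.Ioi 0, rexp (-b * x ^ 2) := by
            refine setIntegral_congr_fun measurableSet_Ioi fun x hx => ?_
            rw [Set.mem_Ioi] at hx
            rw [max_eq_left hx.le]
            congr 1
            rw [htb]; ring
          rw [h1, integral_gaussian_Ioi]
        rw [hleft, hright]
        have hπ : (0:ℝ) < π := Real.pi_pos
        have hs1 : Real.sqrt (2 * π * v) > 0 := Real.sqrt_pos.2 (by positivity)
        have hs2 : Real.sqrt (2 * v * b) > 0 := Real.sqrt_pos.2 (by positivity)
        have e1 : Real.sqrt (π / a) = Real.sqrt (2 * π * v) := by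
          congr 1
          rw [ha_def]
          field_simp
        have e2 : Real.sqrt (π / b) = Real.sqrt (2 * π * v) / Real.sqrt (2 * v * b) := by
          rw [← Real.sqrt_div (by positivity)]
          congr 1
          field_simp
        rw [e1, e2]
        field_simp

/-- Chernoff bound for the positive-part-squared sum under a product measure. -/
lemma chernoff_bound {μ : Measure ℝ} [IsProbabilityMeasure μ] (k : ℕ) (t M r : ℝ)
    (hM0 : 0 ≤ M)
    (hM : ∫⁻ x, ENNReal.ofReal (rexp (t * max x 0 ^ 2)) ∂μ = ENNReal.ofReal M) :
    (Measure.pi fun _ : Fin k => μ) {g | r ≤ t * ∑ i, max (g i) 0 ^ 2}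
      ≤ ENNReal.ofReal (rexp (-r) * M ^ k) := by
  set f : (Fin k → ℝ) → ℝ≥0∞ :=
    fun g => ENNReal.ofReal (rexp (t * ∑ i, max (g i) 0 ^ 2)) with hf_def
  have hXm : Measurable fun x : ℝ => ENNReal.ofReal (rexp (t * max x 0 ^ 2)) :=
    (((measurable_id.max measurable_const).pow_const 2).const_mul t).exp.ennreal_ofReal
  have hSm : Measurable fun g : Fin k → ℝ => ∑ i, max (g i) 0 ^ 2 :=
    Finset.measurable_sum _ fun i _ =>
      (((measurable_pi_apply i).max measurable_const).pow_const 2)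
  have hfm : Measurable f := ((hSm.const_mul t).exp).ennreal_ofReal
  have hprod : ∀ g : Fin k → ℝ,
      f g = ∏ i, ENNReal.ofReal (rexp (t * max (g i) 0 ^ 2)) := by
    intro g
    rw [hf_def]
    simp only []
    rw [Finset.mul_sum, Real.exp_sum]
    exact ENNReal.ofReal_prod_of_nonneg fun i _ => (Real.exp_pos _).le
  have hlint : ∫⁻ g, f g ∂(Measure.pi fun _ : Fin k => μ) = ENNReal.ofReal M ^ k := by
    simp_rw [hprod]
    rw [lintegral_pi_prod_pow μ _ hXm k, hM]
  have hsub : {g : Fin k → ℝ | r ≤ t * ∑ i, max (g i) 0 ^ 2}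
      ⊆ {g : Fin k → ℝ | ENNReal.ofReal (rexp r) ≤ f g} := by
    intro g hg
    exact ENNReal.ofReal_le_ofReal (Real.exp_le_exp.2 hg)
  have markov := mul_meas_ge_le_lintegral₀ (μ := Measure.pi fun _ : Fin k => μ)
    hfm.aemeasurable (ENNReal.ofReal (rexp r))
  have hne : ENNReal.ofReal (rexp r) ≠ 0 := by
    simp [ENNReal.ofReal_eq_zero, not_le, Real.exp_pos]
  have htop : ENNReal.ofReal (rexp r) ≠ ⊤ := ENNReal.ofReal_ne_top
  calc (Measure.pi fun _ : Fin k => μ) {g | r ≤ t * ∑ i, max (g i) 0 ^ 2}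
      ≤ (Measure.pi fun _ : Fin k => μ) {g | ENNReal.ofReal (rexp r) ≤ f g} :=
        measure_mono hsub
    _ = (ENNReal.ofReal (rexp r))⁻¹
        * (ENNReal.ofReal (rexp r) * (Measure.pi fun _ : Fin k => μ)
            {g | ENNReal.ofReal (rexp r) ≤ f g}) := by
        rw [← mul_assoc, ENNReal.inv_mul_cancel hne htop, one_mul]
    _ ≤ (ENNReal.ofReal (rexp r))⁻¹ * ∫⁻ g, f g ∂(Measure.pi fun _ : Fin k => μ) := by
        exact mul_le_mul_right (le_trans (le_of_eq rfl) markov) _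
    _ = ENNReal.ofReal (rexp (-r) * M ^ k) := by
        rw [hlint, ← ENNReal.ofReal_inv_of_pos (Real.exp_pos r), ← Real.exp_neg,
          ← ENNReal.ofReal_pow hM0, ← ENNReal.ofReal_mul (Real.exp_pos _).le]

/-- there is `c > 0` such that for i.i.d. `N(0, σ²)` variables
`g_1, …, g_k`, with probability `≥ 1 - 2·exp(-c·k)` the squared norm of the coordinatewise
ReLU satisfies `σ²·k/4 ≤ Σ_i max(g_i, 0)² ≤ σ²·k`. -/
theorem stmt15 :
    ∃ c : ℝ, 0 < c ∧
      ∀ k : ℕ, 0 < k → ∀ σ : NNReal, 0 < σ →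
        ENNReal.ofReal (1 - 2 * Real.exp (-c * k)) ≤
          (Measure.pi fun _ : Fin k => gaussianReal 0 (σ ^ 2))
            {g | (σ : ℝ) ^ 2 * k / 4 ≤ ∑ i, max (g i) 0 ^ 2 ∧
                 ∑ i, max (g i) 0 ^ 2 ≤ (σ : ℝ) ^ 2 * k} := by
  refine ⟨1 / 100, by norm_num, fun k hk σ hσ => ?_⟩
  set v : ℝ≥0 := σ ^ 2 with hv_def
  have hv : 0 < (v : ℝ) := by
    have : (0:ℝ) < (σ:ℝ) := hσ
    rw [hv_def]; push_cast; positivity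
  have hvcast : ((v : ℝ)) = (σ : ℝ) ^ 2 := by rw [hv_def]; push_cast; ring
  set P := Measure.pi fun _ : Fin k => gaussianReal 0 v with hP_def
  haveI : IsProbabilityMeasure P := by
    rw [hP_def]; infer_instance
  set S : (Fin k → ℝ) → ℝ := fun g => ∑ i, max (g i) 0 ^ 2 with hS_def
  have hSm : Measurable S :=
    Finset.measurable_sum _ fun i _ =>
      (((measurable_pi_apply i).max measurable_const).pow_const 2)
  set Good : Set (Fin k → ℝ) :=
    {g | (σ : ℝ) ^ 2 * k / 4 ≤ S g ∧ S g ≤ (σ : ℝ) ^ 2 * k} with hGood_def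
  have hGoodm : MeasurableSet Good := by
    exact (measurableSet_le measurable_const hSm).inter (measurableSet_le hSm measurable_const)
  -- lower tail Chernoff with t₁ = -(1/(2v)), b₁ = 1/v
  have hA : ∫⁻ x, ENNReal.ofReal (rexp (-(1 / (2 * (v:ℝ))) * max x 0 ^ 2)) ∂(gaussianReal 0 v)
      = ENNReal.ofReal (1 / 2 + 1 / (2 * Real.sqrt 2)) := by
    have := gauss_relu_lintegral hv (t := -(1 / (2 * (v:ℝ)))) (b := 1 / (v:ℝ))
      (by positivity) (by field_simp; ring)
    rw [this]
    congr 3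
    field_simp
  -- upper tail Chernoff with t₂ = 1/(4v), b₂ = 1/(4v)
  have hB : ∫⁻ x, ENNReal.ofReal (rexp ((1 / (4 * (v:ℝ))) * max x 0 ^ 2)) ∂(gaussianReal 0 v)
      = ENNReal.ofReal (1 / 2 + 1 / (2 * Real.sqrt (1 / 2))) := by
    have := gauss_relu_lintegral hv (t := 1 / (4 * (v:ℝ))) (b := 1 / (4 * (v:ℝ)))
      (by positivity) (by field_simp; ring)
    rw [this]
    congr 3
    rw [show 2 * (v:ℝ) * (1 / (4 * (v:ℝ))) = 1 / 2 by field_simp; ring]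
  have hA0 : (0:ℝ) ≤ 1 / 2 + 1 / (2 * Real.sqrt 2) := by positivity
  have hB0 : (0:ℝ) ≤ 1 / 2 + 1 / (2 * Real.sqrt (1 / 2)) := by positivity
  have hbad1 := chernoff_bound (μ := gaussianReal 0 v) k (-(1 / (2 * (v:ℝ))))
    (1 / 2 + 1 / (2 * Real.sqrt 2)) (-(k / 8)) hA0 hA
  have hbad2 := chernoff_bound (μ := gaussianReal 0 v) k (1 / (4 * (v:ℝ)))
    (1 / 2 + 1 / (2 * Real.sqrt (1 / 2))) (k / 4) hB0 hB
  -- numerics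
  have hsqrt2 : (1.4:ℝ) ≤ Real.sqrt 2 := by
    rw [show (1.4:ℝ) = Real.sqrt (1.4 ^ 2) by rw [Real.sqrt_sq]; norm_num]
    apply Real.sqrt_le_sqrt; norm_num
  have hsqrthalf : (0.7:ℝ) ≤ Real.sqrt (1 / 2) := by
    rw [show (0.7:ℝ) = Real.sqrt (0.7 ^ 2) by rw [Real.sqrt_sq]; norm_num]
    apply Real.sqrt_le_sqrt; norm_num
  have hexp18 : rexp (1 / 8) ≤ 8 / 7 := by
    have h := Real.add_one_le_exp (-(1/8) : ℝ)
    have hpos := Real.exp_pos (-(1/8) : ℝ)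
    rw [Real.exp_neg] at h hpos
    have h78 : (7:ℝ)/8 ≤ (rexp (1/8))⁻¹ := by linarith
    have := Real.exp_pos (1/8 : ℝ)
    rw [le_inv_comm₀ (by norm_num) this] at h78
    linarith [h78]
  have hexp14 : rexp (-(1 / 4) : ℝ) ≤ 4 / 5 := by
    have h := Real.add_one_le_exp ((1/4) : ℝ)
    have hpos := Real.exp_pos ((1/4) : ℝ)
    rw [Real.exp_neg]
    rw [inv_le_comm₀ hpos (by norm_num)]
    linarith
  have hexp99 : (99:ℝ) / 100 ≤ rexp (-(1 / 100)) := by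
    have h := Real.add_one_le_exp (-(1/100) : ℝ)
    linarith
  have hnum1 : rexp (1 / 8) * (1 / 2 + 1 / (2 * Real.sqrt 2)) ≤ rexp (-(1 / 100)) := by
    have h1 : 1 / (2 * Real.sqrt 2) ≤ 5 / 14 := by
      rw [div_le_div_iff₀ (by positivity) (by norm_num)]
      nlinarith
    have h2 : (0:ℝ) < rexp (1/8) := Real.exp_pos _
    nlinarith
  have hnum2 : rexp (-(1 / 4) : ℝ) * (1 / 2 + 1 / (2 * Real.sqrt (1 / 2)))
      ≤ rexp (-(1 / 100)) := by
    have h1 : 1 / (2 * Real.sqrt (1 / 2)) ≤ 5 / 7 := by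
      rw [div_le_div_iff₀ (by positivity) (by norm_num)]
      nlinarith
    have h2 : (0:ℝ) < rexp (-(1/4) : ℝ) := Real.exp_pos _
    nlinarith
  -- translate the Chernoff bounds
  have hLk : rexp (-(-(↑k / 8))) * (1 / 2 + 1 / (2 * Real.sqrt 2)) ^ k
      ≤ rexp (-(1 / 100) * k) := by
    rw [neg_neg, show ((k:ℝ) / 8) = k * (1/8) by ring, Real.exp_nat_mul,
      show (-(1/100) * (k:ℝ)) = k * (-(1/100)) by ring, Real.exp_nat_mul,
      ← mul_pow]
    exact pow_le_pow_left₀ (by positivity) hnum1 k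
  have hUk : rexp (-(↑k / 4)) * (1 / 2 + 1 / (2 * Real.sqrt (1 / 2))) ^ k
      ≤ rexp (-(1 / 100) * k) := by
    rw [show (-((k:ℝ) / 4)) = k * (-(1/4)) by ring, Real.exp_nat_mul,
      show (-(1/100) * (k:ℝ)) = k * (-(1/100)) by ring, Real.exp_nat_mul,
      ← mul_pow]
    exact pow_le_pow_left₀ (by positivity) hnum2 k
  have hbad1' : P {g : Fin k → ℝ | -((k:ℝ) / 8) ≤ -(1 / (2 * (v:ℝ))) * S g}
      ≤ ENNReal.ofReal (rexp (-(1 / 100) * k)) :=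
    le_trans hbad1 (ENNReal.ofReal_le_ofReal hLk)
  have hbad2' : P {g : Fin k → ℝ | (k:ℝ) / 4 ≤ (1 / (4 * (v:ℝ))) * S g}
      ≤ ENNReal.ofReal (rexp (-(1 / 100) * k)) :=
    le_trans hbad2 (ENNReal.ofReal_le_ofReal hUk)
  -- complement inclusion
  have hcompl : Goodᶜ ⊆ {g : Fin k → ℝ | -((k:ℝ) / 8) ≤ -(1 / (2 * (v:ℝ))) * S g}
      ∪ {g : Fin k → ℝ | (k:ℝ) / 4 ≤ (1 / (4 * (v:ℝ))) * S g} := by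
    intro g hg
    rw [hGood_def] at hg
    simp only [Set.mem_compl_iff, Set.mem_setOf_eq, not_and_or, not_le] at hg
    rcases hg with hg | hg
    · left
      simp only [Set.mem_setOf_eq]
      rw [← hvcast] at hg
      have h1 : S g ≤ (v:ℝ) * k / 4 := hg.le
      rw [neg_mul, le_neg, ← neg_neg ((k:ℝ)/8)]
      have : 1 / (2 * (v:ℝ)) * S g ≤ 1 / (2 * (v:ℝ)) * ((v:ℝ) * k / 4) :=
        mul_le_mul_of_nonneg_left h1 (by positivity)
      rw [show 1 / (2 * (v:ℝ)) * ((v:ℝ) * k / 4) = (k:ℝ) / 8 by field_simp; ring] at this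
      linarith
    · right
      simp only [Set.mem_setOf_eq]
      rw [← hvcast] at hg
      have : 1 / (4 * (v:ℝ)) * ((v:ℝ) * k) ≤ 1 / (4 * (v:ℝ)) * S g :=
        mul_le_mul_of_nonneg_left hg.le (by positivity)
      rw [show 1 / (4 * (v:ℝ)) * ((v:ℝ) * k) = (k:ℝ) / 4 by field_simp] at this
      linarith
  have hGc : P Goodᶜ ≤ ENNReal.ofReal (2 * rexp (-(1 / 100) * k)) := by
    calc P Goodᶜ ≤ P ({g : Fin k → ℝ | -((k:ℝ) / 8) ≤ -(1 / (2 * (v:ℝ))) * S g}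
          ∪ {g : Fin k → ℝ | (k:ℝ) / 4 ≤ (1 / (4 * (v:ℝ))) * S g}) := measure_mono hcompl
      _ ≤ P {g : Fin k → ℝ | -((k:ℝ) / 8) ≤ -(1 / (2 * (v:ℝ))) * S g}
          + P {g : Fin k → ℝ | (k:ℝ) / 4 ≤ (1 / (4 * (v:ℝ))) * S g} := measure_union_le _ _
      _ ≤ ENNReal.ofReal (rexp (-(1 / 100) * k)) + ENNReal.ofReal (rexp (-(1 / 100) * k)) :=
          add_le_add hbad1' hbad2'
      _ = ENNReal.ofReal (2 * rexp (-(1 / 100) * k)) := by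
          rw [← ENNReal.ofReal_add (Real.exp_pos _).le (Real.exp_pos _).le]
          congr 1; ring
  have hGoodEq : P Good = 1 - P Goodᶜ := by
    rw [← compl_compl Good, prob_compl_eq_one_sub hGoodm.compl, compl_compl]
  have key : ENNReal.ofReal (1 - 2 * rexp (-(1 / 100) * k)) ≤ P Good := by
    rw [hGoodEq, ENNReal.ofReal_sub _ (by positivity), ENNReal.ofReal_one]
    exact tsub_le_tsub_left hGc 1
  exact key
end
end
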